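/- Let K = ℚ(√-7), let O_K be its ring of integers, and let α ∈ O_K satisfy α² - α + 2 = 0. Let π ∈ O_K with α ∤ π, π ≠ 1 and π ≠ -1. Then for every integer m ≥ 1 and every integer i ≥ 1, ν_α(π^{2^{i+1} m} - 1) = ν_α(π^{2^i m} - 1) + 1, where ν_α(w) denotes the largest integer e ≥ 0 such that α^e divides w, for nonzero w ∈ O_K. -/

import Mathlib

section Generic

variable {R : Type*} [CommRing R] [IsDomain R] {α : R}

/-- Torsion lemma: in a domain where `α` is prime, `α ∣ 2`, `α² ∤ 2`, and the residue
ring mod `α` has the property that everything is `≡ 0` or `1`, the only roots of unity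
are `±1`. -/
theorem aux_torsion (hp : Prime α) (h2 : α ∣ 2) (h2' : ¬ α ^ 2 ∣ (2 : R))
    (hres : ∀ w : R, α ∣ w ∨ α ∣ (w - 1)) :
    ∀ n : ℕ, 1 ≤ n → ∀ ζ : R, ζ ^ n = 1 → ζ = 1 ∨ ζ = -1 := by
  intro n
  induction n using Nat.strong_induction_on with
  | _ n IH =>
    intro hn ζ hζ
    have hαζ : ¬ α ∣ ζ := by
      intro hd
      exact hp.not_unit (isUnit_of_dvd_one (hζ ▸ hd.pow (by omega : n ≠ 0)))
    have hζ1 : α ∣ ζ - 1 := (hres ζ).resolve_left hαζ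
    rcases Nat.even_or_odd n with he | ho
    · -- even case
      obtain ⟨k, rfl⟩ := he
      have hk1 : 1 ≤ k := by omega
      have hk : (ζ ^ 2) ^ k = 1 := by rw [← pow_mul]; rw [show 2 * k = k + k by ring]; exact hζ
      rcases IH k (by omega) hk1 _ hk with h | h
      · have : (ζ - 1) * (ζ + 1) = 0 := by linear_combination h
        rcases mul_eq_zero.1 this with h' | h'
        · left; exact sub_eq_zero.1 h'
        · right; linear_combination h'
      · -- ζ ^ 2 = -1 : impossible
        exfalso
        have hζp1 : α ∣ ζ + 1 := by
          have : ζ + 1 = (ζ - 1) + 2 := by ring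
          rw [this]; exact dvd_add hζ1 h2
        have : α ^ 2 ∣ (2 : R) := by
          have hd : α ^ 2 ∣ (ζ - 1) * (ζ + 1) := by rw [sq]; exact mul_dvd_mul hζ1 hζp1
          have he2 : (ζ - 1) * (ζ + 1) = -2 := by linear_combination h
          rw [he2] at hd
          exact (dvd_neg.1 hd)
        exact h2' this
    · -- odd case: show ζ = 1
      left
      by_contra hne
      have hS : (∑ j ∈ Finset.range n, ζ ^ j) * (ζ - 1) = 0 := by
        rw [geom_sum_mul, hζ, sub_self]
      have hS0 : (∑ j ∈ Finset.range n, ζ ^ j) = 0 :=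
        (mul_eq_zero.1 hS).resolve_right (sub_ne_zero.2 hne)
      have hdvdn : α ∣ (n : R) := by
        have h1 : α ∣ (∑ j ∈ Finset.range n, ζ ^ j) - n := by
          have : (∑ j ∈ Finset.range n, ζ ^ j) - n = ∑ j ∈ Finset.range n, (ζ ^ j - 1) := by
            rw [Finset.sum_sub_distrib, Finset.sum_const, Finset.card_range, nsmul_eq_mul,
              mul_one]
          rw [this]
          refine Finset.dvd_sum fun j _ => ?_
          exact dvd_trans hζ1 (by simpa using sub_dvd_pow_sub_pow ζ 1 j)
        rw [hS0, zero_sub] at h1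
        exact (dvd_neg.1 h1)
      -- n odd, α ∣ 2 and α ∣ n gives α ∣ 1
      have hcop : IsCoprime (2 : ℤ) (n : ℤ) := by
        rw [Int.isCoprime_iff_gcd_eq_one]
        have hg : Nat.gcd 2 n = 1 := by
          rw [Nat.gcd_rec, Nat.odd_iff.mp ho]
          rfl
        simpa [Int.gcd] using hg
      obtain ⟨u, v, huv⟩ := hcop
      have : α ∣ (1 : R) := by
        have hcast : (u : R) * 2 + (v : R) * n = 1 := by
          have := congrArg (fun z : ℤ => (z : R)) huv
          push_cast at this
          linear_combination this
        rw [← hcast]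
        exact dvd_add (Dvd.dvd.mul_left h2 _) (Dvd.dvd.mul_left hdvdn _)
      exact hp.not_unit (isUnit_of_dvd_one this)


end Generic

/-- The key doubling step for the `α`-adic valuation. -/
theorem aux_step {R : Type*} [CommRing R] [IsDomain R] [WfDvdMonoid R] {α : R} (hp : Prime α) (h2 : α ∣ 2) (h2' : ¬ α ^ 2 ∣ (2 : R))
    (hres : ∀ w : R, α ∣ w ∨ α ∣ (w - 1)) (y : R) (hy : ¬ α ∣ y)
    (hx2 : (y ^ 2) ^ 2 ≠ 1) :
    multiplicity α ((y ^ 2) ^ 2 - 1) = multiplicity α (y ^ 2 - 1) + 1 := by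
  set x := y ^ 2 with hxdef
  have hy1 : α ∣ y - 1 := (hres y).resolve_left hy
  have hyp1 : α ∣ y + 1 := by
    have : y + 1 = (y - 1) + 2 := by ring
    rw [this]; exact dvd_add hy1 h2
  have hx1 : α ^ 2 ∣ x - 1 := by
    have : x - 1 = (y - 1) * (y + 1) := by rw [hxdef]; ring
    rw [this, sq]; exact mul_dvd_mul hy1 hyp1
  have hxp1 : α ∣ x + 1 := by
    have : x + 1 = (x - 1) + 2 := by ring
    rw [this]
    exact dvd_add (dvd_trans (dvd_pow_self α two_ne_zero) hx1) h2
  have hxp1' : ¬ α ^ 2 ∣ x + 1 := by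
    intro hd
    apply h2'
    have : (2 : R) = (x + 1) - (x - 1) := by ring
    rw [this]; exact dvd_sub hd hx1
  have hmul : x ^ 2 - 1 = (x - 1) * (x + 1) := by ring
  have hfin : FiniteMultiplicity α ((x - 1) * (x + 1)) := by
    rw [← hmul]
    exact FiniteMultiplicity.of_not_isUnit hp.not_isUnit (sub_ne_zero.2 hx2)
  have hone : multiplicity α (x + 1) = 1 :=
    multiplicity_eq_of_dvd_of_not_dvd (by simpa using hxp1) hxp1'
  rw [hmul, multiplicity_mul hp hfin, hone]

open NumberField in
theorem aux_norm (K : Type*) [Field K] [NumberField K]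
    (hdeg : Module.finrank ℚ K = 2)
    (α : RingOfIntegers K) (hα : α ^ 2 - α + 2 = 0) :
    Algebra.norm ℤ α = 2 := by
  have hx : (algebraMap (RingOfIntegers K) K α) ^ 2 - (algebraMap (RingOfIntegers K) K α)
      + 2 = 0 := by
    have := congrArg (algebraMap (RingOfIntegers K) K) hα
    push_cast at this
    simpa [map_ofNat] using this
  set x : K := algebraMap (RingOfIntegers K) K α with hxdef
  have hq : ∀ q : ℚ, q ^ 2 - q + 2 ≠ 0 := by
    intro q h
    nlinarith [sq_nonneg (2 * q - 1)]
  have li : LinearIndependent ℚ ![(1 : K), x] := by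
    rw [LinearIndependent.pair_iff]
    intro s t hst
    rcases eq_or_ne t 0 with rfl | ht
    · simp only [zero_smul, add_zero, smul_eq_zero] at hst
      exact ⟨hst.resolve_right one_ne_zero, rfl⟩
    · exfalso
      have hxq : x = algebraMap ℚ K (-s / t) := by
        have : t • x = (-s) • (1 : K) := by
          rw [neg_smul]
          linear_combination hst
        rw [Algebra.algebraMap_eq_smul_one, div_eq_inv_mul, ← smul_smul, ← this, smul_smul,
          inv_mul_cancel₀ ht, one_smul]
      apply hq (-s / t)
      apply (algebraMap ℚ K).injective
      rw [map_add, map_sub, map_pow, map_ofNat, map_zero, ← hxq]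
      simpa using hx
  obtain ⟨b, hb⟩ : ∃ b : Module.Basis (Fin 2) ℚ K, ⇑b = ![(1 : K), x] :=
    ⟨basisOfLinearIndependentOfCardEqFinrank li (by simp [hdeg]),
      coe_basisOfLinearIndependentOfCardEqFinrank li _⟩
  have hb0 : b 0 = 1 := by rw [hb]; rfl
  have hb1 : b 1 = x := by rw [hb]; rfl
  have hnormQ : Algebra.norm ℚ x = 2 := by
    rw [Algebra.norm_eq_matrix_det b]
    have e0 : x * b 0 = b 1 := by rw [hb0, hb1, mul_one]
    have e1 : x * b 1 = (-2 : ℚ) • b 0 + b 1 := by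
      rw [hb0, hb1, Rat.smul_one_eq_cast]
      push_cast
      linear_combination hx
    have hM : Algebra.leftMulMatrix b x = !![0, -2; 1, 1] := by
      ext i j
      fin_cases i <;> fin_cases j <;>
        simp [Algebra.leftMulMatrix_eq_repr_mul, e0, e1, Finsupp.single_apply]
    rw [hM]
    simp [Matrix.det_fin_two_of]
  have := Algebra.coe_norm_int α
  rw [hnormQ] at this
  exact_mod_cast this

set_option synthInstance.maxHeartbeats 1000000 in
set_option maxHeartbeats 1000000 in
/-- Let `K = ℚ(√-7)` (a number field of degree `2` over `ℚ` containing a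
square root of `-7`), `O_K` its ring of integers, and `α ∈ O_K` with
`α² - α + 2 = 0`. Let `π ∈ O_K` with `α ∤ π`, `π ≠ 1` and `π ≠ -1`. Then for
every `m ≥ 1` and every `i ≥ 1`,
`ν_α(π^{2^{i+1} m} - 1) = ν_α(π^{2^i m} - 1) + 1`, where `ν_α(w)` (here
`multiplicity α w`) is the largest `e ≥ 0` with `α^e ∣ w`, for nonzero `w`. -/
theorem nu_alpha_pow_doubling (K : Type*) [Field K] [NumberField K]
    (hdeg : Module.finrank ℚ K = 2) (hs : ∃ s : K, s ^ 2 = -7)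
    (α : NumberField.RingOfIntegers K) (hα : α ^ 2 - α + 2 = 0)
    (π : NumberField.RingOfIntegers K) (hπ : ¬ α ∣ π)
    (h1 : π ≠ 1) (hm1 : π ≠ -1)
    (m i : ℕ) (hm : 1 ≤ m) (hi : 1 ≤ i) :
    multiplicity α (π ^ (2 ^ (i + 1) * m) - 1) =
      multiplicity α (π ^ (2 ^ i * m) - 1) + 1 := by
  letI : WfDvdMonoid (NumberField.RingOfIntegers K) := IsNoetherianRing.wfDvdMonoid
  have hα0 : α ≠ 0 := by
    rintro rfl
    have h20 : (2 : NumberField.RingOfIntegers K) = 0 := by linear_combination hα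
    exact two_ne_zero h20
  have hnorm : Algebra.norm ℤ α = 2 := aux_norm K hdeg α hα
  have habs : Ideal.absNorm (Ideal.span {α}) = 2 := by
    rw [Ideal.absNorm_span_singleton, hnorm]
    rfl
  have hprime : Prime α :=
    Ideal.prime_of_irreducible_absNorm_span hα0
      (by rw [habs]; exact Nat.prime_two)
  have hcard : Nat.card (NumberField.RingOfIntegers K ⧸ Ideal.span {α}) = 2 := by
    rw [← Submodule.cardQuot_apply, ← Ideal.absNorm_apply, habs]
  have hres : ∀ w : NumberField.RingOfIntegers K, α ∣ w ∨ α ∣ (w - 1) := by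
    intro w
    obtain ⟨z₀, hz₀, huniq⟩ := (Nat.card_eq_two_iff'
      (0 : NumberField.RingOfIntegers K ⧸ Ideal.span {α})).mp hcard
    have h10 : (1 : NumberField.RingOfIntegers K ⧸ Ideal.span {α}) ≠ 0 := by
      intro h
      have : Subsingleton (NumberField.RingOfIntegers K ⧸ Ideal.span {α}) :=
        subsingleton_of_zero_eq_one h.symm
      exact hz₀ (Subsingleton.elim _ _)
    by_cases hw : Ideal.Quotient.mk (Ideal.span {α}) w = 0
    · left
      rwa [Ideal.Quotient.eq_zero_iff_mem, Ideal.mem_span_singleton] at hw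
    · right
      have hw1 : Ideal.Quotient.mk (Ideal.span {α}) w = 1 := (huniq _ hw).trans (huniq _ h10).symm
      have : Ideal.Quotient.mk (Ideal.span {α}) (w - 1) = 0 := by
        rw [map_sub, map_one, hw1, sub_self]
      rwa [Ideal.Quotient.eq_zero_iff_mem, Ideal.mem_span_singleton] at this
  have h2 : α ∣ 2 := ⟨1 - α, by linear_combination hα⟩
  have h2' : ¬ α ^ 2 ∣ (2 : NumberField.RingOfIntegers K) := by
    rintro ⟨c, hc⟩
    have hcancel : α * (1 - α) = α * (α * c) := by
      rw [← mul_assoc, ← sq, ← hc]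
      linear_combination -hα
    have h1α : 1 - α = α * c := mul_left_cancel₀ hα0 hcancel
    have : α ∣ 1 := by
      have : (1 : NumberField.RingOfIntegers K) = (1 - α) + α := by ring
      rw [this, h1α]
      exact dvd_add (Dvd.intro _ rfl) dvd_rfl
    exact hprime.not_unit (isUnit_of_dvd_one this)
  have tors := aux_torsion hprime h2 h2' hres
  have hπ1 : ∀ n : ℕ, 1 ≤ n → π ^ n ≠ 1 := by
    intro n hn h
    rcases tors n hn π h with h' | h'
    · exact h1 h'
    · exact hm1 h'
  obtain ⟨j, rfl⟩ : ∃ j, i = j + 1 := ⟨i - 1, by omega⟩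
  set y := π ^ (2 ^ j * m) with hy_def
  have e1 : π ^ (2 ^ (j + 1) * m) = y ^ 2 := by
    rw [hy_def, ← pow_mul]
    congr 1
    ring
  have e2 : π ^ (2 ^ (j + 1 + 1) * m) = (y ^ 2) ^ 2 := by
    rw [hy_def, ← pow_mul, ← pow_mul]
    congr 1
    ring
  have hy : ¬ α ∣ y := fun hd => hπ (hprime.dvd_of_dvd_pow hd)
  have hx2 : (y ^ 2) ^ 2 ≠ 1 := by
    rw [← e2]
    exact hπ1 _ (Nat.one_le_iff_ne_zero.mpr (by positivity))
  rw [e2, e1]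
  exact aux_step hprime h2 h2' hres y hy hx2
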